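/- Let G be a finite non-abelian group with m(G) < k(G) - 1. Then every element of G is conjugate to each of its non-trivial powers; that is, for every x in G and every integer j such that x^j ≠ 1, the element x^j is conjugate to x in G. -/

import Mathlib

/-- `kClasses G` is the number of conjugacy classes of `G`. -/
noncomputable def kClasses (G : Type*) [Group G] : ℕ := Nat.card (ConjClasses G)

/-- `mVal G` is the least positive integer `n` such that the union of any `n` distinct
non-trivial conjugacy classes of `G` together with the identity of `G` is a subgroup of `G`. -/
noncomputable def mVal (G : Type*) [Group G] : ℕ :=
  sInf {n : ℕ | 0 < n ∧ ∀ S : Finset (ConjClasses G),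
    S.card = n → (∀ c ∈ S, c ≠ ConjClasses.mk (1 : G)) →
    ∃ H : Subgroup G, (H : Set G) = insert (1 : G) (⋃ c ∈ S, c.carrier)}


theorem stmt_4 (G : Type*) [Group G] [Finite G]
    (hna : ¬ ∀ a b : G, a * b = b * a) (h : mVal G < kClasses G - 1) :
    ∀ (x : G) (j : ℤ), x ^ j ≠ 1 → IsConj x (x ^ j) := by
  classical
  have : Fintype G := Fintype.ofFinite G
  have : Fintype (ConjClasses G) := Fintype.ofFinite _
  intro x j hxj
  by_contra hconj
  have hx1 : x ≠ 1 := by rintro rfl; simp at hxj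
  set k := kClasses G with hk
  have hkcard : k = Fintype.card (ConjClasses G) := by
    simp [hk, kClasses, Nat.card_eq_fintype_card]
  -- mk g = mk 1 ↔ g = 1
  have hmk1 : ∀ g : G, ConjClasses.mk g = ConjClasses.mk (1 : G) ↔ g = 1 := by
    intro g
    rw [ConjClasses.mk_eq_mk_iff_isConj, isConj_one_left]
  -- the nontrivial classes
  set A : Finset (ConjClasses G) := Finset.univ.erase (ConjClasses.mk (1 : G)) with hA
  have hAcard : A.card = k - 1 := by
    rw [hA, Finset.card_erase_of_mem (Finset.mem_univ _), Finset.card_univ, hkcard]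
  -- k - 1 is in the defining set, so the set is nonempty
  have hk1mem : (k - 1) ∈ {n : ℕ | 0 < n ∧ ∀ S : Finset (ConjClasses G),
      S.card = n → (∀ c ∈ S, c ≠ ConjClasses.mk (1 : G)) →
      ∃ H : Subgroup G, (H : Set G) = insert (1 : G) (⋃ c ∈ S, c.carrier)} := by
    constructor
    · omega
    · intro S hScard hSnt
      have hSA : S ⊆ A := by
        intro c hc
        exact Finset.mem_erase.2 ⟨hSnt c hc, Finset.mem_univ _⟩
      have hSeq : S = A := Finset.eq_of_subset_of_card_le hSA (by omega)
      refine ⟨⊤, ?_⟩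
      ext g
      simp only [Subgroup.coe_top, Set.mem_univ, true_iff, Set.mem_insert_iff,
        Set.mem_iUnion]
      by_cases hg : g = 1
      · exact Or.inl hg
      · refine Or.inr ⟨ConjClasses.mk g, ?_, ConjClasses.mem_carrier_mk⟩
        rw [hSeq, hA]
        exact Finset.mem_erase.2 ⟨fun hh => hg ((hmk1 g).1 hh), Finset.mem_univ _⟩
  have hmem := Nat.sInf_mem ⟨k - 1, hk1mem⟩
  set n := mVal G with hn
  obtain ⟨hn0, hprop⟩ : 0 < n ∧ ∀ S : Finset (ConjClasses G),
      S.card = n → (∀ c ∈ S, c ≠ ConjClasses.mk (1 : G)) →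
      ∃ H : Subgroup G, (H : Set G) = insert (1 : G) (⋃ c ∈ S, c.carrier) := hmem
  have hnk : n < k - 1 := h
  -- mk x ≠ mk (x^j)
  have hne : ConjClasses.mk x ≠ ConjClasses.mk (x ^ j) := by
    intro hh
    exact hconj (ConjClasses.mk_eq_mk_iff_isConj.1 hh)
  set B : Finset (ConjClasses G) := A.erase (ConjClasses.mk (x ^ j)) with hB
  have hxjA : ConjClasses.mk (x ^ j) ∈ A :=
    Finset.mem_erase.2 ⟨fun hh => hxj ((hmk1 _).1 hh), Finset.mem_univ _⟩
  have hBcard : B.card = k - 1 - 1 := by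
    rw [hB, Finset.card_erase_of_mem hxjA, hAcard]
  have hxB : ConjClasses.mk x ∈ B := by
    refine Finset.mem_erase.2 ⟨hne, ?_⟩
    exact Finset.mem_erase.2 ⟨fun hh => hx1 ((hmk1 _).1 hh), Finset.mem_univ _⟩
  have hBx : (B.erase (ConjClasses.mk x)).card = k - 1 - 1 - 1 := by
    rw [Finset.card_erase_of_mem hxB, hBcard]
  obtain ⟨S', hS'sub, hS'card⟩ :=
    Finset.exists_subset_card_eq (s := B.erase (ConjClasses.mk x)) (n := n - 1) (by omega)
  have hxS' : ConjClasses.mk x ∉ S' := fun hh =>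
    Finset.notMem_erase _ _ (hS'sub hh)
  set S : Finset (ConjClasses G) := insert (ConjClasses.mk x) S' with hS
  have hScard : S.card = n := by
    rw [hS, Finset.card_insert_of_notMem hxS', hS'card]; omega
  have hSnt : ∀ c ∈ S, c ≠ ConjClasses.mk (1 : G) := by
    intro c hc
    rcases Finset.mem_insert.1 hc with rfl | hc'
    · exact fun hh => hx1 ((hmk1 _).1 hh)
    · have : c ∈ A := Finset.mem_of_mem_erase (Finset.mem_of_mem_erase (hS'sub hc'))
      exact (Finset.mem_erase.1 this).1
  obtain ⟨H, hH⟩ := hprop S hScard hSnt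
  have hxH : x ∈ H := by
    have : x ∈ (H : Set G) := by
      rw [hH]
      refine Set.mem_insert_iff.2 (Or.inr ?_)
      exact Set.mem_iUnion₂.2 ⟨ConjClasses.mk x, Finset.mem_insert_self _ _,
        ConjClasses.mem_carrier_mk⟩
    exact this
  have hxjH : x ^ j ∈ (H : Set G) := H.zpow_mem hxH j
  rw [hH] at hxjH
  rcases Set.mem_insert_iff.1 hxjH with hh | hh
  · exact hxj hh
  · obtain ⟨c, hcS, hcmem⟩ := Set.mem_iUnion₂.1 hh
    have hceq : ConjClasses.mk (x ^ j) = c := ConjClasses.mem_carrier_iff_mk_eq.1 hcmem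
    rw [← hceq] at hcS
    rcases Finset.mem_insert.1 hcS with hh' | hh'
    · exact hne hh'.symm
    · exact Finset.notMem_erase _ _ (Finset.mem_of_mem_erase (hS'sub hh'))
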